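/- Let X be a finite set of cardinality n, let π̃ be a probability distribution on X, and let p ∈ {1,…,n}. Let x_1, x_2, … be elements of X and, for T ≥ 0, let L_T = {x_1,…,x_T} (with L_0 = ∅). Call index T a success if π̃(L_{T−1}) ≥ 1/2 or π̃(L_T) ≥ π̃(L_{T−1}) + 1/(4n), and suppose that among the indices 1, 2, …, T* there are at least p successes. Then π̃(L_{T*}) ≥ min{1/2, p/(4n)} = p/(4n). -/

import Mathlib

open Finset in
open scoped Classical in
/-- Let `X` be a finite set of cardinality `n`, `π̃` a probability
distribution on `X`, and `p ∈ {1,…,n}`.  Let `x₁, x₂, …` be elements of `X` and for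
`T ≥ 0` set `L_T = {x₁, …, x_T}` (so `L_0 = ∅`).  Call an index `T` a *success* if
`π̃(L_{T−1}) ≥ 1/2` or `π̃(L_T) ≥ π̃(L_{T−1}) + 1/(4n)`, and suppose that among the
indices `1, …, T*` there are at least `p` successes.  Then
`π̃(L_{T*}) ≥ min{1/2, p/(4n)} = p/(4n)`. -/
theorem stmt15 {X : Type*} [Fintype X] [DecidableEq X] (n : ℕ) (hcard : Fintype.card X = n)
    (πt : X → ℝ) (hπt : ∀ x, 0 ≤ πt x) (hsum : ∑ x, πt x = 1)
    (p : ℕ) (hp1 : 1 ≤ p) (hpn : p ≤ n)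
    (x : ℕ → X) (L : ℕ → Finset X) (hL : ∀ T, L T = Finset.image x (Finset.Icc 1 T))
    (Tstar : ℕ)
    (hsucc : p ≤ ((Finset.Icc 1 Tstar).filter (fun T =>
        (1 : ℝ) / 2 ≤ ∑ a ∈ L (T - 1), πt a ∨
        (∑ a ∈ L (T - 1), πt a) + 1 / (4 * n) ≤ ∑ a ∈ L T, πt a)).card) :
    min ((1 : ℝ) / 2) ((p : ℝ) / (4 * n)) = (p : ℝ) / (4 * n) ∧
      (p : ℝ) / (4 * n) ≤ ∑ a ∈ L Tstar, πt a := by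
  classical
  have hn1 : 1 ≤ n := le_trans hp1 hpn
  have hn0 : (0:ℝ) < n := by exact_mod_cast hn1
  have h4n : (0:ℝ) < 4 * n := by positivity
  have hpn' : (p:ℝ) ≤ n := by exact_mod_cast hpn
  have hmin : min ((1 : ℝ) / 2) ((p : ℝ) / (4 * n)) = (p : ℝ) / (4 * n) := by
    apply min_eq_right
    rw [div_le_div_iff₀ h4n (by norm_num : (0:ℝ) < 2)]
    nlinarith
  refine ⟨hmin, ?_⟩
  set P : ℕ → Prop := fun T =>
      (1 : ℝ) / 2 ≤ ∑ a ∈ L (T - 1), πt a ∨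
      (∑ a ∈ L (T - 1), πt a) + 1 / (4 * n) ≤ ∑ a ∈ L T, πt a with hP
  -- monotonicity of the sums
  have hmono : ∀ T, ∑ a ∈ L T, πt a ≤ ∑ a ∈ L (T+1), πt a := by
    intro T
    apply Finset.sum_le_sum_of_subset_of_nonneg
    · rw [hL, hL]
      exact Finset.image_subset_image (Finset.Icc_subset_Icc le_rfl (Nat.le_succ T))
    · intro a _ _; exact hπt a
  have hnn : ∀ T, (0:ℝ) ≤ ∑ a ∈ L T, πt a := by
    intro T; exact Finset.sum_nonneg (fun a _ => hπt a)
  have key : ∀ T, (1:ℝ)/2 ≤ ∑ a ∈ L T, πt a ∨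
      (((Finset.Icc 1 T).filter P).card : ℝ) / (4*n) ≤ ∑ a ∈ L T, πt a := by
    intro T
    induction T with
    | zero =>
      right
      have : Finset.Icc 1 0 = (∅ : Finset ℕ) := by simp
      rw [this]
      simp [hnn 0]
    | succ T ih =>
      have hins : Finset.Icc 1 (T+1) = insert (T+1) (Finset.Icc 1 T) := by
        ext m
        simp [Finset.mem_Icc, Finset.mem_insert]
        omega
      have hcard' : ((Finset.Icc 1 (T+1)).filter P).card =
          ((Finset.Icc 1 T).filter P).card + (if P (T+1) then 1 else 0) := by
        rw [hins, Finset.filter_insert]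
        split
        · rw [Finset.card_insert_of_notMem (by simp)]
        · simp
      by_cases hPT : P (T+1)
      · -- success
        rcases id hPT with h12 | hstep
        · -- prior sum ≥ 1/2
          left
          have : (T+1) - 1 = T := by omega
          rw [this] at h12
          exact le_trans h12 (hmono T)
        · have hT : (T+1) - 1 = T := by omega
          rw [hT] at hstep
          rcases ih with h | h
          · left
            calc (1:ℝ)/2 ≤ ∑ a ∈ L T, πt a := h
              _ ≤ ∑ a ∈ L (T+1), πt a := hmono T
          · right
            rw [hcard', if_pos hPT]
            push_cast
            rw [add_div]
            calc (((Finset.Icc 1 T).filter P).card : ℝ)/(4*n) + 1/(4*n)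
                ≤ (∑ a ∈ L T, πt a) + 1/(4*n) := by linarith
              _ ≤ ∑ a ∈ L (T+1), πt a := hstep
      · -- not a success
        rw [hcard', if_neg hPT, Nat.add_zero]
        rcases ih with h | h
        · left; exact le_trans h (hmono T)
        · right; exact le_trans h (hmono T)
  have hpcard : (p:ℝ) ≤ (((Finset.Icc 1 Tstar).filter P).card : ℝ) := by
    exact Nat.cast_le.mpr hsucc
  rcases key Tstar with h | h
  · calc (p:ℝ)/(4*n) ≤ (1:ℝ)/2 := by rw [← hmin]; exact min_le_left _ _
      _ ≤ ∑ a ∈ L Tstar, πt a := h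
  · refine le_trans ?_ h
    gcongr
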